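/- Let G be a finite simple matching covered graph on vertex set ZMod (2n) with n ≥ 3 that contains every C-edge {i, i+1}, and suppose G satisfies Property 1, Property 2 and Property 3 with respect to this labelling. Then G admits a PMValid 2-edge-colouring, and μ(G) = 2. -/
import Mathlib


/-- A perfect matching of `G`: a set of edges of `G` such that every vertex
lies in exactly one edge of the set. -/
def IsPerfectMatching {V : Type*} (G : SimpleGraph V) (M : Set (Sym2 V)) : Prop :=
  M ⊆ G.edgeSet ∧ ∀ v : V, ∃! e : Sym2 V, e ∈ M ∧ v ∈ e

/-- `c` is a PMValid `k`-edge-colouring of `G`: it colours the edges of `G` with colours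
in `{1, …, k}`, every perfect matching of `G` is monochromatic under `c`, and every
colour class contains a perfect matching. -/
def PMValid {V : Type*} (G : SimpleGraph V) (c : Sym2 V → ℕ) (k : ℕ) : Prop :=
  (∀ e ∈ G.edgeSet, c e ∈ Finset.Icc 1 k) ∧
  (∀ M : Set (Sym2 V), IsPerfectMatching G M → ∀ e ∈ M, ∀ e' ∈ M, c e = c e') ∧
  (∀ i ∈ Finset.Icc 1 k, ∃ M : Set (Sym2 V), IsPerfectMatching G M ∧ ∀ e ∈ M, c e = i)

/-- The matching index `μ(G)`: the largest `k` for which `G` admits a PMValid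
`k`-edge-colouring (`0` if there is none, in particular if `G` has no perfect matching). -/
noncomputable def matchingIndex {V : Type*} (G : SimpleGraph V) : ℕ :=
  sSup {k | ∃ c : Sym2 V → ℕ, PMValid G c k}

/-- `G` is matching covered: every edge lies in some perfect matching. -/
def MatchingCovered {V : Type*} (G : SimpleGraph V) : Prop :=
  ∀ e ∈ G.edgeSet, ∃ M : Set (Sym2 V), IsPerfectMatching G M ∧ e ∈ M

/-- `e` is a C-edge: an edge of the distinguished Hamiltonian cycle `0, 1, …, 2n-1`
on `ZMod (2n)`, i.e. `e = {i, i+1}` for some `i`. -/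
def IsCEdge (n : ℕ) (e : Sym2 (ZMod (2 * n))) : Prop :=
  ∃ i : ZMod (2 * n), e = s(i, i + 1)

/-- `e` is a legal edge: it joins two vertices of the same parity
(the parity of the residue is well defined since the modulus `2n` is even). -/
def IsLegal (n : ℕ) (e : Sym2 (ZMod (2 * n))) : Prop :=
  ∃ a b : ZMod (2 * n), e = s(a, b) ∧ a.val % 2 = b.val % 2

/-- `k` lies on the arc strictly between `i` and `j` in clockwise (increasing) order,
i.e. `k ∈ {i+1, i+2, …, j-1}`. -/
def InArc (n : ℕ) (i j k : ZMod (2 * n)) : Prop :=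
  0 < (k - i).val ∧ (k - i).val < (j - i).val

/-- Edges `e = {a, b}` and `e'` cross: `e'` has one endpoint in `P(e)` (the arc strictly
between `a` and `b`) and its other endpoint in `P'(e)` (the arc strictly between `b` and `a`). -/
def Crosses (n : ℕ) (e e' : Sym2 (ZMod (2 * n))) : Prop :=
  ∃ a b x y : ZMod (2 * n), e = s(a, b) ∧ e' = s(x, y) ∧ InArc n a b x ∧ InArc n b a y

/-- `{e, e'}` is a drum: an unordered pair of crossing legal edges of the form
`{u, v}` and `{u+1, v+1}`. -/
def IsDrum (n : ℕ) (e e' : Sym2 (ZMod (2 * n))) : Prop :=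
  IsLegal n e ∧ IsLegal n e' ∧ Crosses n e e' ∧
  ∃ u v : ZMod (2 * n),
    (e = s(u, v) ∧ e' = s(u + 1, v + 1)) ∨ (e' = s(u, v) ∧ e = s(u + 1, v + 1))

/-- Property 1: every edge of `G` is a C-edge or a legal edge. -/
def Property1 (n : ℕ) (G : SimpleGraph (ZMod (2 * n))) : Prop :=
  ∀ e ∈ G.edgeSet, IsCEdge n e ∨ IsLegal n e

/-- Property 2: every pair of crossing edges of `G` forms a drum. -/
def Property2 (n : ℕ) (G : SimpleGraph (ZMod (2 * n))) : Prop :=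
  ∀ e ∈ G.edgeSet, ∀ e' ∈ G.edgeSet, Crosses n e e' → IsDrum n e e'

/-- Property 3: for every legal edge `e` of `G` there is exactly one edge `e'` of `G`
such that `{e, e'}` is a drum. -/
def Property3 (n : ℕ) (G : SimpleGraph (ZMod (2 * n))) : Prop :=
  ∀ e ∈ G.edgeSet, IsLegal n e → ∃! e' : Sym2 (ZMod (2 * n)), e' ∈ G.edgeSet ∧ IsDrum n e e'

namespace S12

variable {n : ℕ}

local notation "V" => ZMod (2*n)

lemma nz (hn : 3 ≤ n) : NeZero (2*n) := ⟨by omega⟩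

lemma val_lt (hn : 3 ≤ n) (a : V) : a.val < 2*n := by
  haveI := nz hn; exact ZMod.val_lt a

lemma cast_val (hn : 3 ≤ n) (a : V) : ((a.val : ℕ) : V) = a := by
  haveI := nz hn; exact ZMod.natCast_rightInverse a

lemma self_eq_add (hn : 3 ≤ n) (v a : V) : v = a + (((v - a).val : ℕ) : V) := by
  rw [cast_val hn]; ring

lemma sub_idx (hn : 3 ≤ n) (a : V) (j k : ℕ) (hj : j < 2*n) (hk : k < 2*n) :
    ((a + (j : V)) - (a + (k : V))).val = if k ≤ j then j - k else j + 2*n - k := by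
  haveI := nz hn
  have h : (a + (j : V)) - (a + (k : V)) = (j : V) - (k : V) := by ring
  rw [h]
  split
  · next hkj =>
    have : (j : V) - (k : V) = ((j - k : ℕ) : V) := by
      have := Nat.cast_sub (R := V) hkj; rw [this]
    rw [this, ZMod.val_cast_of_lt (by omega)]
  · next hkj =>
    have : (j : V) - (k : V) = ((j + 2*n - k : ℕ) : V) := by
      have h2 : ((j + 2*n - k : ℕ) : V) = (j : V) + ((2*n : ℕ) : V) - (k : V) := by
        rw [← Nat.cast_add, ← Nat.cast_sub (by omega)]
      rw [h2, ZMod.natCast_self]; ring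
    rw [this, ZMod.val_cast_of_lt (by omega)]

lemma idx_inj (hn : 3 ≤ n) {a : V} {j k : ℕ} (hj : j < 2*n) (hk : k < 2*n)
    (h : a + (j : V) = a + (k : V)) : j = k := by
  have := sub_idx hn a j k hj hk
  rw [h, sub_self] at this
  simp only [ZMod.val_zero] at this
  split at this <;> omega

lemma par_add (hn : 3 ≤ n) (a : V) (j : ℕ) :
    (a + (j : V)).val % 2 = (a.val + j) % 2 := by
  haveI := nz hn
  rw [ZMod.val_add, ZMod.val_natCast]
  have h2 : (2:ℕ) ∣ 2*n := ⟨n, rfl⟩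
  rw [Nat.mod_mod_of_dvd _ h2, Nat.add_mod, Nat.mod_mod_of_dvd _ h2, ← Nat.add_mod]

lemma sub_self_idx (hn : 3 ≤ n) (a : V) (j : ℕ) (hj : j < 2*n) :
    ((a + (j : V)) - a).val = j := by
  have := sub_idx hn a j 0 hj (by omega)
  simpa using this

lemma one_cast (hn : 3 ≤ n) (a : V) : a + 1 = a + ((1:ℕ) : V) := by norm_num

lemma par_succ (hn : 3 ≤ n) (a : V) : (a + 1).val % 2 = (a.val + 1) % 2 := by
  rw [one_cast hn a, par_add hn]

/-- e is a matching-style helpers -/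
lemma partner_spec {W : Type*} {G : SimpleGraph W} {M : Set (Sym2 W)}
    (hM : IsPerfectMatching G M) (v : W) :
    ∃ w, w ≠ v ∧ s(v,w) ∈ M ∧ ∀ e ∈ M, v ∈ e → e = s(v,w) := by
  obtain ⟨e, ⟨heM, hv⟩, hu⟩ := hM.2 v
  have hspec : s(v, Sym2.Mem.other hv) = e := Sym2.other_spec hv
  refine ⟨Sym2.Mem.other hv, ?_, by rw [hspec]; exact heM, ?_⟩
  · intro h
    have : e ∈ G.edgeSet := hM.1 heM
    rw [← hspec, h] at this
    exact G.irrefl ((SimpleGraph.mem_edgeSet G).mp this)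
  · intro e' he' hve'
    exact (hu e' ⟨he', hve'⟩).trans hspec.symm

noncomputable def pi' {W : Type*} {G : SimpleGraph W} {M : Set (Sym2 W)}
    (hM : IsPerfectMatching G M) (v : W) : W :=
  Classical.choose (partner_spec hM v)

lemma pi_ne {W : Type*} {G : SimpleGraph W} {M : Set (Sym2 W)}
    (hM : IsPerfectMatching G M) (v : W) : pi' hM v ≠ v :=
  (Classical.choose_spec (partner_spec hM v)).1

lemma pi_mem {W : Type*} {G : SimpleGraph W} {M : Set (Sym2 W)}
    (hM : IsPerfectMatching G M) (v : W) : s(v, pi' hM v) ∈ M :=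
  (Classical.choose_spec (partner_spec hM v)).2.1

lemma pi_uniq {W : Type*} {G : SimpleGraph W} {M : Set (Sym2 W)}
    (hM : IsPerfectMatching G M) (v : W) {e : Sym2 W} (he : e ∈ M) (hv : v ∈ e) :
    e = s(v, pi' hM v) :=
  (Classical.choose_spec (partner_spec hM v)).2.2 e he hv

lemma pi_eq {W : Type*} {G : SimpleGraph W} {M : Set (Sym2 W)}
    (hM : IsPerfectMatching G M) {v w : W} (h : s(v,w) ∈ M) : pi' hM v = w := by
  have := pi_uniq hM v h (by simp)
  rw [Sym2.eq_iff] at this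
  rcases this with ⟨_, h2⟩ | ⟨h1, h2⟩
  · exact h2.symm
  · rw [← h1, h2]

lemma pi_invol {W : Type*} {G : SimpleGraph W} {M : Set (Sym2 W)}
    (hM : IsPerfectMatching G M) (v : W) : pi' hM (pi' hM v) = v := by
  apply pi_eq hM
  rw [Sym2.eq_swap]; exact pi_mem hM v

lemma even_card_invol {α : Type*} [DecidableEq α] (s : Finset α) (f : α → α)
    (h1 : ∀ x ∈ s, f x ∈ s) (h2 : ∀ x ∈ s, f (f x) = x) (h3 : ∀ x ∈ s, f x ≠ x) :
    Even s.card := by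
  induction s using Finset.strongInduction with
  | _ s ih =>
    rcases s.eq_empty_or_nonempty with rfl | ⟨x, hx⟩
    · simp
    · have hfx : f x ∈ s := h1 x hx
      have hxne : f x ≠ x := h3 x hx
      set t := (s.erase x).erase (f x) with ht
      have htsub : t ⊂ s := by
        refine Finset.ssubset_iff_of_subset ?_ |>.2 ⟨x, hx, by simp [ht]⟩
        exact (Finset.erase_subset _ _).trans (Finset.erase_subset _ _)
      have hmem : ∀ y, y ∈ t ↔ y ∈ s ∧ y ≠ x ∧ y ≠ f x := by
        intro y; simp [ht, Finset.mem_erase]; tauto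
      have hcard : t.card = s.card - 2 := by
        rw [ht, Finset.card_erase_of_mem, Finset.card_erase_of_mem hx]
        · omega
        · exact Finset.mem_erase.2 ⟨hxne, hfx⟩
      have hev : Even t.card := by
        refine ih t htsub ?_ ?_ ?_
        · intro y hy
          obtain ⟨hys, hyx, hyfx⟩ := (hmem y).1 hy
          refine (hmem (f y)).2 ⟨h1 y hys, ?_, ?_⟩
          · intro h; exact hyfx ((h2 y hys).symm.trans (congrArg f h))
          · intro h; exact hyx ((h2 y hys).symm.trans ((congrArg f h).trans (h2 x hx)))
        · intro y hy; exact h2 y ((hmem y).1 hy).1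
        · intro y hy; exact h3 y ((hmem y).1 hy).1
      have h2le : 2 ≤ s.card := Finset.one_lt_card.2 ⟨x, hx, f x, hfx, hxne.symm⟩
      obtain ⟨c, hc⟩ := hev
      exact ⟨c + 1, by omega⟩

lemma legal_ends (hn : 3 ≤ n) {a b : V} (h : IsLegal n (s(a,b))) : a.val % 2 = b.val % 2 := by
  obtain ⟨x, y, heq, hp⟩ := h
  rw [Sym2.eq_iff] at heq
  rcases heq with ⟨rfl, rfl⟩ | ⟨rfl, rfl⟩
  · exact hp
  · exact hp.symm

lemma not_legal_cedge (hn : 3 ≤ n) (i : V) : ¬ IsLegal n (s(i, i+1)) := by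
  intro h
  have := legal_ends hn h
  rw [par_succ hn] at this
  omega

lemma cedge_shape {a b i : V} (h : s(a,b) = s(i,i+1)) : b = a + 1 ∨ a = b + 1 := by
  rw [Sym2.eq_iff] at h
  rcases h with ⟨rfl, rfl⟩ | ⟨rfl, rfl⟩
  · left; rfl
  · right; rfl

lemma add_idx_ne (hn : 3 ≤ n) (a : V) {j : ℕ} (h0 : 0 < j) (h : j < 2*n) :
    a + (j : V) ≠ a := by
  intro h'
  have : a + (j:V) = a + ((0:ℕ):V) := by simpa using h'
  have := idx_inj hn h (by omega) this
  omega

lemma crosses_symm (hn : 3 ≤ n) {e e' : Sym2 V} (h : Crosses n e e') : Crosses n e' e := by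
  obtain ⟨a, b, x, y, he, he', hx, hy⟩ := h
  have hj0lt : (b - a).val < 2*n := val_lt hn _
  have hjlt : (x - a).val < 2*n := val_lt hn _
  have hklt : (y - a).val < 2*n := val_lt hn _
  set j0 := (b - a).val with hj0
  set j := (x - a).val with hjd
  set k := (y - a).val with hkd
  have hb : b = a + (j0 : V) := self_eq_add hn b a
  have hxe : x = a + (j : V) := self_eq_add hn x a
  have hye : y = a + (k : V) := self_eq_add hn y a
  obtain ⟨hx1', hx2'⟩ := hx
  have hx1 : 0 < j := hx1'
  have hx2 : j < j0 := hx2'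
  obtain ⟨hy1, hy2⟩ := hy
  have hyb : (y - b).val = if j0 ≤ k then k - j0 else k + 2*n - j0 := by
    rw [hye, hb]; exact sub_idx hn a k j0 hklt hj0lt
  have hab : (a - b).val = 2*n - j0 := by
    have h0 : a = a + ((0:ℕ) : V) := by simp
    rw [hb]; nth_rewrite 1 [h0]
    rw [sub_idx hn a 0 j0 (by omega) hj0lt]
    have : ¬ (j0 ≤ 0) := by omega
    simp [this]
  rw [hyb] at hy1
  rw [hyb, hab] at hy2
  have hkr : j0 < k := by split at hy1 <;> split at hy2 <;> omega
  refine ⟨y, x, a, b, he'.trans (Sym2.eq_swap), he, ?_, ?_⟩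
  · have e1 : (a - y).val = 2*n - k := by
      rw [hye]
      have := sub_idx hn a 0 k (by omega) hklt
      have hnk : ¬ (k ≤ 0) := by omega
      simpa [hnk] using this
    have e2 : (x - y).val = j + 2*n - k := by
      rw [hye, hxe]
      have := sub_idx hn a j k hjlt hklt
      have hnk : ¬ (k ≤ j) := by omega
      simpa [hnk] using this
    exact ⟨by rw [e1]; omega, by rw [e1, e2]; omega⟩
  · have e1 : (b - x).val = j0 - j := by
      rw [hb, hxe]
      have := sub_idx hn a j0 j hj0lt hjlt
      have hk' : j ≤ j0 := by omega
      simpa [hk'] using this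
    have e2 : (y - x).val = k - j := by
      rw [hye, hxe]
      have := sub_idx hn a k j hklt hjlt
      have hk' : j ≤ k := by omega
      simpa [hk'] using this
    exact ⟨by rw [e1]; omega, by rw [e1, e2]; omega⟩

lemma isDrum_symm (hn : 3 ≤ n) {e e' : Sym2 V} (h : IsDrum n e e') : IsDrum n e' e := by
  obtain ⟨hl, hl', hc, u, v, hor⟩ := h
  exact ⟨hl', hl, crosses_symm hn hc, u, v, hor.symm⟩

lemma drum_shape (hn : 3 ≤ n) {a b : V} {e' : Sym2 V} (hd : IsDrum n (s(a,b)) e') :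
    e' = s(a+1, b+1) ∨ e' = s(a-1, b-1) := by
  obtain ⟨_, _, _, u, v, hor⟩ := hd
  rcases hor with ⟨h1, h2⟩ | ⟨h1, h2⟩
  · rw [Sym2.eq_iff] at h1
    rcases h1 with ⟨rfl, rfl⟩ | ⟨rfl, rfl⟩
    · left; exact h2
    · left; rw [h2]; exact Sym2.eq_swap
  · rw [Sym2.eq_iff] at h2
    rcases h2 with ⟨ha, hb⟩ | ⟨ha, hb⟩
    · right; rw [h1, ha, hb]; congr 1 <;> ring
    · right; rw [h1, ha, hb, Sym2.eq_swap]; congr 1 <;> ring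

end S12

namespace S12X
open S12
variable {n : ℕ}
local notation "V" => ZMod (2*n)

lemma ne_shift2 (hn : 3 ≤ n) (a b : V) : s(a,b) ≠ s(a+2, b+2) := by
  intro h
  rw [Sym2.eq_iff] at h
  have h2 : ((2:ℕ) : V) = 2 := by norm_num
  have h4 : ((4:ℕ) : V) = 4 := by norm_num
  rcases h with ⟨ha, _⟩ | ⟨ha, hb⟩
  · exact add_idx_ne hn a (j := 2) (by omega) (by omega) (by rw [h2]; exact ha.symm)
  · have : a + 4 = a := by nth_rewrite 2 [ha]; rw [hb]; ring
    exact add_idx_ne hn a (j := 4) (by omega) (by omega) (by rw [h4]; exact this)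

def GoodE (n : ℕ) (G : SimpleGraph (ZMod (2*n))) (p : ℕ) (e : Sym2 (ZMod (2*n))) : Prop :=
  (∃ i : ZMod (2*n), e = s(i, i+1) ∧ i.val % 2 = p) ∨
  (∃ u v : ZMod (2*n), u.val % 2 = p ∧ s(u,v) ∈ G.edgeSet ∧ s(u+1,v+1) ∈ G.edgeSet ∧
     IsDrum n (s(u,v)) (s(u+1,v+1)) ∧ (e = s(u,v) ∨ e = s(u+1,v+1)))

lemma good_unique (hn : 3 ≤ n) (G : SimpleGraph V) (h3 : Property3 n G)
    {e : Sym2 V} (he : e ∈ G.edgeSet) (hg0 : GoodE n G 0 e) (hg1 : GoodE n G 1 e) : False := by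
  rcases hg0 with ⟨i, hei, hip⟩ | ⟨u, v, hup, hE1, hE2, hD, hor⟩
  · rcases hg1 with ⟨i', hei', hip'⟩ | ⟨u', v', hup', hE1', hE2', hD', hor'⟩
    · have h := hei.symm.trans hei'
      rw [Sym2.eq_iff] at h
      rcases h with ⟨rfl, _⟩ | ⟨ha, hb⟩
      · omega
      · have : i + 2 = i := by nth_rewrite 2 [ha]; rw [← hb]; ring
        have h2 : ((2:ℕ) : V) = 2 := by norm_num
        exact add_idx_ne hn i (j := 2) (by omega) (by omega) (by rw [h2]; exact this)
    · have hleg : IsLegal n e := by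
        rcases hor' with h | h
        · rw [h]; exact hD'.1
        · rw [h]; exact hD'.2.1
      rw [hei] at hleg
      exact not_legal_cedge hn i hleg
  · rcases hg1 with ⟨i', hei', hip'⟩ | ⟨u', v', hup', hE1', hE2', hD', hor'⟩
    · have hleg : IsLegal n e := by
        rcases hor with h | h
        · rw [h]; exact hD.1
        · rw [h]; exact hD.2.1
      rw [hei'] at hleg
      exact not_legal_cedge hn i' hleg
    · have hvp : v.val % 2 = 0 := by have := legal_ends hn hD.1; omega
      have hvp' : v'.val % 2 = 1 := by have := legal_ends hn hD'.1; omega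
      have hleg : IsLegal n e := by
        rcases hor with h | h
        · rw [h]; exact hD.1
        · rw [h]; exact hD.2.1
      obtain ⟨f, _, hfu⟩ := h3 e he hleg
      have hsucc : ∀ w : V, (w+1).val % 2 = (w.val + 1) % 2 := par_succ hn
      rcases hor with h_e | h_e <;> rcases hor' with h_e' | h_e'
      · have h := h_e.symm.trans h_e'
        rw [Sym2.eq_iff] at h
        rcases h with ⟨rfl, rfl⟩ | ⟨rfl, rfl⟩ <;> omega
      · have hf1 : s(u+1,v+1) = f := hfu _ ⟨hE2, by rw [h_e]; exact hD⟩
        have hf2 : s(u',v') = f := hfu _ ⟨hE1', by rw [h_e']; exact isDrum_symm hn hD'⟩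
        have hx : s(u',v') = s(u+1,v+1) := hf2.trans hf1.symm
        rw [Sym2.eq_iff] at hx
        have hee : s(u,v) = s(u'+1, v'+1) := h_e.symm.trans h_e'
        rcases hx with ⟨hu', hv'⟩ | ⟨hu', hv'⟩
        · rw [hu', hv'] at hee
          have : s(u,v) = s(u+2, v+2) := by
            rw [hee]; congr 1 <;> ring
          exact ne_shift2 hn u v this
        · rw [hu', hv'] at hee
          have : s(u,v) = s(u+2, v+2) := by
            rw [hee, Sym2.eq_swap]; congr 1 <;> ring
          exact ne_shift2 hn u v this
      · have hf1 : s(u,v) = f := hfu _ ⟨hE1, by rw [h_e]; exact isDrum_symm hn hD⟩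
        have hf2 : s(u'+1,v'+1) = f := hfu _ ⟨hE2', by rw [h_e']; exact hD'⟩
        have hx : s(u,v) = s(u'+1,v'+1) := hf1.trans hf2.symm
        rw [Sym2.eq_iff] at hx
        have hee : s(u+1,v+1) = s(u',v') := h_e.symm.trans h_e'
        rcases hx with ⟨hu', hv'⟩ | ⟨hu', hv'⟩
        · rw [hu', hv'] at hee
          refine ne_shift2 hn u' v' (hee.symm.trans ?_)
          congr 1 <;> ring
        · rw [hu', hv'] at hee
          refine ne_shift2 hn u' v' (hee.symm.trans ?_)
          rw [Sym2.eq_swap]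
          congr 1 <;> ring
      · have h := h_e.symm.trans h_e'
        rw [Sym2.eq_iff] at h
        have e1 := hsucc u
        have e2 := hsucc v
        have e3 := hsucc u'
        have e4 := hsucc v'
        rcases h with ⟨ha, hb⟩ | ⟨ha, hb⟩
        · have := add_right_cancel ha; have := add_right_cancel hb
          subst this; omega
        · have h5 := add_right_cancel ha; have h6 := add_right_cancel hb
          subst h5; omega

end S12X

namespace S12Y
open S12 S12X
variable {n : ℕ}
local notation "V" => ZMod (2*n)

lemma add_add_cast (a : V) (p q : ℕ) : (a + (p:V)) + (q:V) = a + ((p+q :ℕ):V) := by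
  push_cast; ring

lemma escape (hn : 3 ≤ n) {G : SimpleGraph V} {M : Set (Sym2 V)}
    (hM : IsPerfectMatching G M) (a : V) (j0 : ℕ)
    (hj2 : 2 ≤ j0) (hj0lt : j0 < 2*n) (hj0e : j0 % 2 = 0)
    (hedge : s(a, a + (j0 : V)) ∈ M) :
    ∃ j k : ℕ, 0 < j ∧ j < j0 ∧ j0 < k ∧ k < 2*n ∧ pi' hM (a + (j:V)) = a + (k:V) := by
  have hpia : pi' hM a = a + (j0 : V) := pi_eq hM hedge
  have hpiw : pi' hM (a + (j0:V)) = a := pi_eq hM (by rw [Sym2.eq_swap]; exact hedge)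
  set f : ℕ → ℕ := fun j => ((pi' hM (a + (j:V))) - a).val with hf
  have hflt : ∀ j, f j < 2*n := fun j => val_lt hn _
  have hfe : ∀ j : ℕ, pi' hM (a + (j:V)) = a + (f j : V) := fun j => self_eq_add hn _ a
  have hfinv : ∀ j, j < 2*n → f (f j) = j := by
    intro j hj
    have h1 : pi' hM (a + (f j : V)) = a + (j : V) := by
      rw [← hfe j, pi_invol]
    rw [hf]; simp only []
    rw [h1, sub_self_idx hn a j hj]
  have hnofix : ∀ j, f j ≠ j := by
    intro j h
    have := hfe j
    rw [h] at this
    exact pi_ne hM _ this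
  by_contra hcon
  push_neg at hcon
  have hclo : ∀ j ∈ Finset.Ioo 0 j0, f j ∈ Finset.Ioo 0 j0 := by
    intro j hj
    rw [Finset.mem_Ioo] at hj
    have hne0 : f j ≠ 0 := by
      intro h0
      have : pi' hM (a + (j:V)) = a := by rw [hfe j, h0]; simp
      have h2 := congrArg (pi' hM) this
      rw [pi_invol, hpia] at h2
      have : j = j0 := idx_inj hn (by omega) hj0lt h2
      omega
    have hnej0 : f j ≠ j0 := by
      intro h0
      have : pi' hM (a + (j:V)) = a + (j0:V) := by rw [hfe j, h0]
      have h2 := congrArg (pi' hM) this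
      rw [pi_invol, hpiw] at h2
      have h3 : a + ((j:ℕ):V) = a + ((0:ℕ):V) := by
        rw [h2]; simp
      have : j = 0 := idx_inj hn (by omega) (by omega) h3
      omega
    have hnbig : ¬ (j0 < f j) := by
      intro hbig
      exact hcon j (f j) (by omega) (by omega) hbig (hflt j) (hfe j)
    rw [Finset.mem_Ioo]
    omega
  have hev : Even (Finset.Ioo 0 j0).card :=
    even_card_invol _ f hclo
      (fun x hx => hfinv x (by rw [Finset.mem_Ioo] at hx; omega))
      (fun x _ => hnofix x)
  rw [Nat.card_Ioo] at hev
  obtain ⟨c, hc⟩ := hev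
  omega

end S12Y

namespace S12Z
open S12 S12X S12Y
variable {n : ℕ}
local notation "V" => ZMod (2*n)

lemma inArc1 (hn : 3 ≤ n) (a : V) {q r : ℕ} (hq : q < 2*n) (hr0 : 0 < r) (hrq : r < q) :
    InArc n a (a + (q:V)) (a + (r:V)) := by
  constructor
  · rw [sub_self_idx hn a r (by omega)]; omega
  · rw [sub_self_idx hn a r (by omega), sub_self_idx hn a q hq]; omega

lemma inArc2 (hn : 3 ≤ n) (a : V) {q r : ℕ} (hq0 : 0 < q) (hqr : q < r) (hr : r < 2*n) :
    InArc n (a + (q:V)) a (a + (r:V)) := by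
  have h1 : ((a + (r:V)) - (a + (q:V))).val = r - q := by
    rw [sub_idx hn a r q hr (by omega)]
    simp [Nat.le_of_lt hqr]
  have h2 : (a - (a + (q:V))).val = 2*n - q := by
    have h0 : a = a + ((0:ℕ):V) := by simp
    nth_rewrite 1 [h0]
    rw [sub_idx hn a 0 q (by omega) (by omega)]
    have : ¬ (q ≤ 0) := by omega
    simp [this]
  exact ⟨by rw [h1]; omega, by rw [h1, h2]; omega⟩

lemma vertex_edge {W : Type*} {G : SimpleGraph W} {M : Set (Sym2 W)}
    (hM : IsPerfectMatching G M) {e : Sym2 W} (he : e ∈ M) {v w : W}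
    (hv : v ∈ e) (hp : pi' hM v = w) : e = s(v, w) := by
  rw [← hp]; exact pi_uniq hM v he hv

lemma arc_good (hn : 3 ≤ n) (G : SimpleGraph V)
    (h1 : Property1 n G) (h2 : Property2 n G) (h3 : Property3 n G)
    {M : Set (Sym2 V)} (hM : IsPerfectMatching G M) :
    ∀ m : ℕ, m + 1 ≤ n → ∀ a : V,
      (∀ j : ℕ, j < 2*m → ∃ k : ℕ, k < 2*m ∧ pi' hM (a + (j:V)) = a + (k:V)) →
      ∀ e ∈ M, (∃ j : ℕ, j < 2*m ∧ (a + (j:V)) ∈ e) → GoodE n G (a.val % 2) e := by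
  intro m
  induction m using Nat.strong_induction_on with
  | _ m ih =>
  intro hmn a hclo e heM hje
  obtain ⟨j, hjm, hje⟩ := hje
  have hm1 : 1 ≤ m := by omega
  have hm2n : 2*m ≤ 2*n - 2 := by omega
  obtain ⟨j0, hj0m, hj0⟩ := hclo 0 (by omega)
  have hpia : pi' hM a = a + (j0:V) := by simpa using hj0
  have hj0ne : j0 ≠ 0 := by
    intro h; rw [h] at hpia; simp at hpia; exact pi_ne hM a hpia
  have he0 : s(a, a + (j0:V)) ∈ M := by
    have := pi_mem hM a; rw [hpia] at this; exact this
  have hpiw : pi' hM (a + (j0:V)) = a := pi_eq hM (by rw [Sym2.eq_swap]; exact he0)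
  have he0E : s(a, a + (j0:V)) ∈ G.edgeSet := hM.1 he0
  rcases h1 _ he0E with hce | hleg
  · -- C-edge case
    obtain ⟨i, hei⟩ := hce
    rcases cedge_shape hei with hw | ha
    · -- a + j0 = a + 1
      have hj0_1 : j0 = 1 := by
        have h1c : a + ((j0:ℕ):V) = a + ((1:ℕ):V) := by rw [hw]; norm_num
        exact idx_inj hn (by omega) (by omega) h1c
      have hpia1 : pi' hM (a + ((1:ℕ):V)) = a := by rw [← hj0_1]; exact hpiw
      -- subarc closure
      have hcloA : ∀ j' : ℕ, j' < 2*(m-1) →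
          ∃ k : ℕ, k < 2*(m-1) ∧ pi' hM ((a + ((2:ℕ):V)) + (j':V)) = (a + ((2:ℕ):V)) + (k:V) := by
        intro j' hj'
        obtain ⟨k, hk, hpk⟩ := hclo (2 + j') (by omega)
        have hkne0 : k ≠ 0 := by
          intro h0; rw [h0] at hpk
          have h2 := congrArg (pi' hM) hpk
          have h0' : a + ((0:ℕ):V) = a := by simp
          rw [pi_invol, h0', hpia, hj0_1] at h2
          have : 2 + j' = 1 := idx_inj hn (by omega) (by omega) h2
          omega
        have hkne1 : k ≠ 1 := by
          intro h0; rw [h0] at hpk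
          have h2 := congrArg (pi' hM) hpk
          rw [pi_invol, hpia1] at h2
          have h3 : a + ((2 + j' :ℕ):V) = a + ((0:ℕ):V) := by rw [h2]; simp
          have : 2 + j' = 0 := idx_inj hn (by omega) (by omega) h3
          omega
        refine ⟨k - 2, by omega, ?_⟩
        rw [add_add_cast, add_add_cast]
        have hi1 : 2 + (k - 2) = k := by omega
        have hi2 : 2 + j' = 2 + j' := rfl
        rw [hi1, hpk]
      have hparA : ((a + ((2:ℕ):V)).val % 2) = a.val % 2 := by
        rw [par_add hn]; omega
      rcases Nat.lt_or_ge j 2 with hj2 | hj2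
      · have hj01 : j = 0 ∨ j = 1 := by omega
        have hee : e = s(a, a + ((1:ℕ):V)) := by
          rcases hj01 with h0 | h0
          · rw [h0] at hje; simp only [Nat.cast_zero, add_zero] at hje
            have h4 := vertex_edge hM heM hje hpia
            rw [h4, hj0_1]
          · rw [h0] at hje
            have h4 := vertex_edge hM heM hje hpia1
            rw [h4, Sym2.eq_swap]
        exact Or.inl ⟨a, by rw [hee]; norm_num, rfl⟩
      · have hmem : (a + ((2:ℕ):V)) + ((j-2 : ℕ):V) ∈ e := by
          rw [add_add_cast]
          have h5 : 2 + (j - 2) = j := by omega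
          rw [h5]; exact hje
        have hg := ih (m-1) (by omega) (by omega) _ hcloA e heM ⟨j-2, by omega, hmem⟩
        rwa [hparA] at hg
    · -- a = (a + j0) + 1 : impossible
      exfalso
      have hac : a + ((0:ℕ):V) = a + ((j0 + 1:ℕ):V) := by
        rw [← add_add_cast]; simpa using ha
      have := idx_inj hn (by omega) (by omega) hac
      omega
  · -- legal case
    have hpar : a.val % 2 = (a + (j0:V)).val % 2 := legal_ends hn hleg
    have hj0e : j0 % 2 = 0 := by
      have := par_add hn a j0; omega
    have hj0ge2 : 2 ≤ j0 := by omega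
    obtain ⟨jj, k0, hjj0, hjjlt, hk0gt, hk0lt, hpij⟩ :=
      escape hn hM a j0 hj0ge2 (by omega) hj0e he0
    obtain ⟨k', hk'm, hpk'⟩ := hclo jj (by omega)
    have hkk : k0 = k' := idx_inj hn (by omega) (by omega) (hpij.symm.trans hpk')
    have hk0m : k0 < 2*m := by omega
    have he1 : s(a + (jj:V), a + (k0:V)) ∈ M := by
      have := pi_mem hM (a + (jj:V)); rw [hpij] at this; exact this
    have hcross : Crosses n (s(a, a + (j0:V))) (s(a + (jj:V), a + (k0:V))) :=
      ⟨a, a + (j0:V), a + (jj:V), a + (k0:V), rfl, rfl,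
        inArc1 hn a (by omega) (by omega) (by omega),
        inArc2 hn a (by omega) (by omega) (by omega)⟩
    have hdrum0 := h2 _ he0E _ (hM.1 he1) hcross
    rcases drum_shape hn hdrum0 with he1s | he1s
    · -- e1 = s(a+1, w+1)
      have hw1 : (a + (j0:V)) + 1 = a + ((j0+1 :ℕ):V) := by push_cast; ring
      rw [Sym2.eq_iff] at he1s
      have hjk : jj = 1 ∧ k0 = j0 + 1 := by
        rcases he1s with ⟨hA, hB⟩ | ⟨hA, hB⟩
        · constructor
          · apply idx_inj hn (by omega) (by omega)
            rw [hA]; norm_num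
          · apply idx_inj hn (by omega) (by omega)
            rw [hB, hw1]
        · exfalso
          have : k0 = 1 := by
            apply idx_inj hn (by omega) (by omega)
            rw [hB]; norm_num
          omega
      obtain ⟨hjj1, hk0j⟩ := hjk
      rw [hjj1, hk0j] at he1 hdrum0
      have hj0m2 : j0 + 1 < 2*m := by omega
      have hc1 : a + 1 = a + ((1:ℕ):V) := by norm_num
      have hsE : s(a + 1, (a + (j0:V)) + 1) = s(a + ((1:ℕ):V), a + ((j0+1:ℕ):V)) := by
        rw [hc1, hw1]
      have hdrum : IsDrum n (s(a, a + (j0:V))) (s(a + ((1:ℕ):V), a + ((j0+1:ℕ):V))) := hdrum0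
      have he1' : s(a + ((1:ℕ):V), a + ((j0+1:ℕ):V)) ∈ M := he1
      have he1E : s(a + ((1:ℕ):V), a + ((j0+1:ℕ):V)) ∈ G.edgeSet := hM.1 he1'
      have huniqc : ∀ g ∈ M, Crosses n (s(a, a + (j0:V))) g →
          g = s(a + ((1:ℕ):V), a + ((j0+1:ℕ):V)) := by
        intro g hg hcg
        obtain ⟨f, hf, hfu⟩ := h3 _ he0E hleg
        have hg1 := hfu g ⟨hM.1 hg, h2 _ he0E _ (hM.1 hg) hcg⟩
        have hg2 := hfu _ ⟨he1E, hdrum⟩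
        rw [hg1, ← hg2]
      have hpi1 : pi' hM (a + ((1:ℕ):V)) = a + ((j0+1:ℕ):V) := pi_eq hM he1'
      have hpi1' : pi' hM (a + ((j0+1:ℕ):V)) = a + ((1:ℕ):V) :=
        pi_eq hM (by rw [Sym2.eq_swap]; exact he1')
      have hidx : ∀ t : ℕ, 0 < t → t < 2*m → t ≠ 1 → t ≠ j0 → t ≠ j0 + 1 →
          ∃ k1, k1 < 2*m ∧ k1 ≠ 0 ∧ k1 ≠ 1 ∧ k1 ≠ j0 ∧ k1 ≠ j0+1 ∧
          pi' hM (a + (t:V)) = a + (k1:V) ∧ (2 ≤ t ∧ t ≤ j0 - 1 → 2 ≤ k1 ∧ k1 ≤ j0 - 1)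
             ∧ (j0 + 2 ≤ t → j0 + 2 ≤ k1) := by
        intro t ht0 htm ht1 htj0 htj1
        obtain ⟨k1, hk1m, hpk1⟩ := hclo t (by omega)
        have hk1ne0 : k1 ≠ 0 := by
          intro h0; rw [h0] at hpk1
          have h2' := congrArg (pi' hM) hpk1
          have h0' : a + ((0:ℕ):V) = a := by simp
          rw [pi_invol, h0', hpia] at h2'
          have : t = j0 := idx_inj hn (by omega) (by omega) h2'
          omega
        have hk1ne1 : k1 ≠ 1 := by
          intro h0; rw [h0] at hpk1
          have h2' := congrArg (pi' hM) hpk1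
          rw [pi_invol, hpi1] at h2'
          have : t = j0 + 1 := idx_inj hn (by omega) (by omega) h2'
          omega
        have hk1nej0 : k1 ≠ j0 := by
          intro h0; rw [h0] at hpk1
          have h2' := congrArg (pi' hM) hpk1
          rw [pi_invol, hpiw] at h2'
          have h3' : a + ((t:ℕ):V) = a + ((0:ℕ):V) := by rw [h2']; simp
          have : t = 0 := idx_inj hn (by omega) (by omega) h3'
          omega
        have hk1nej1 : k1 ≠ j0+1 := by
          intro h0; rw [h0] at hpk1
          have h2' := congrArg (pi' hM) hpk1
          rw [pi_invol, hpi1'] at h2'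
          have : t = 1 := idx_inj hn (by omega) (by omega) h2'
          omega
        refine ⟨k1, hk1m, hk1ne0, hk1ne1, hk1nej0, hk1nej1, hpk1, ?_, ?_⟩
        · rintro ⟨ht2, htj⟩
          by_contra hcon
          have hk1big : j0 + 2 ≤ k1 := by omega
          have hedge : s(a + (t:V), a + (k1:V)) ∈ M := by
            have := pi_mem hM (a + (t:V)); rw [hpk1] at this; exact this
          have hcr : Crosses n (s(a, a + (j0:V))) (s(a + (t:V), a + (k1:V))) :=
            ⟨a, a + (j0:V), _, _, rfl, rfl, inArc1 hn a (by omega) (by omega) (by omega),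
              inArc2 hn a (by omega) (by omega) (by omega)⟩
          have hu := huniqc _ hedge hcr
          rw [Sym2.eq_iff] at hu
          rcases hu with ⟨hA, _⟩ | ⟨hA, _⟩
          · have : t = 1 := idx_inj hn (by omega) (by omega) hA
            omega
          · have : t = j0+1 := idx_inj hn (by omega) (by omega) hA
            omega
        · intro htbig
          by_contra hcon
          have hk1small : 2 ≤ k1 ∧ k1 ≤ j0 - 1 := by omega
          have hedge : s(a + (t:V), a + (k1:V)) ∈ M := by
            have := pi_mem hM (a + (t:V)); rw [hpk1] at this; exact this
          have hcr : Crosses n (s(a, a + (j0:V))) (s(a + (k1:V), a + (t:V))) :=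
            ⟨a, a + (j0:V), _, _, rfl, rfl, inArc1 hn a (by omega) (by omega) (by omega),
              inArc2 hn a (by omega) (by omega) (by omega)⟩
          have hu := huniqc _ (by rw [Sym2.eq_swap]; exact hedge) hcr
          rw [Sym2.eq_iff] at hu
          rcases hu with ⟨_, hB⟩ | ⟨_, hB⟩
          · have : t = j0+1 := idx_inj hn (by omega) (by omega) hB
            omega
          · have : t = 1 := idx_inj hn (by omega) (by omega) hB
            omega
      have hcloA : ∀ j' : ℕ, j' < 2*((j0-2)/2) →
          ∃ k : ℕ, k < 2*((j0-2)/2) ∧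
            pi' hM ((a + ((2:ℕ):V)) + (j':V)) = (a + ((2:ℕ):V)) + (k:V) := by
        intro j' hj'
        have h2m' : 2*((j0-2)/2) = j0 - 2 := by omega
        obtain ⟨k1, hk1m, _, _, _, _, hpk1, hsm, _⟩ :=
          hidx (2+j') (by omega) (by omega) (by omega) (by omega) (by omega)
        obtain ⟨hA, hB⟩ := hsm ⟨by omega, by omega⟩
        refine ⟨k1 - 2, by omega, ?_⟩
        rw [add_add_cast, add_add_cast]
        have h5 : 2 + (k1 - 2) = k1 := by omega
        rw [h5, hpk1]
      have hcloB : ∀ j' : ℕ, j' < 2*((2*m - j0-2)/2) →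
          ∃ k : ℕ, k < 2*((2*m-j0-2)/2) ∧
            pi' hM ((a + ((j0+2:ℕ):V)) + (j':V)) = (a + ((j0+2:ℕ):V)) + (k:V) := by
        intro j' hj'
        have h2m' : 2*((2*m-j0-2)/2) = 2*m - j0 - 2 := by omega
        obtain ⟨k1, hk1m, _, _, _, _, hpk1, _, hbg⟩ :=
          hidx (j0+2+j') (by omega) (by omega) (by omega) (by omega) (by omega)
        have hB := hbg (by omega)
        refine ⟨k1 - (j0+2), by omega, ?_⟩
        rw [add_add_cast, add_add_cast]
        have h5 : j0+2 + (k1 - (j0+2)) = k1 := by omega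
        rw [h5, hpk1]
      have hparA : ((a + ((2:ℕ):V)).val % 2) = a.val % 2 := by rw [par_add hn]; omega
      have hparB : ((a + ((j0+2:ℕ):V)).val % 2) = a.val % 2 := by rw [par_add hn]; omega
      have hgood0 : GoodE n G (a.val % 2) (s(a, a + (j0:V))) := by
        refine Or.inr ⟨a, a + (j0:V), rfl, he0E, ?_, ?_, Or.inl rfl⟩
        · rw [hsE]; exact he1E
        · rw [hsE]; exact hdrum
      have hgood1 : GoodE n G (a.val % 2) (s(a + ((1:ℕ):V), a + ((j0+1:ℕ):V))) := by
        refine Or.inr ⟨a, a + (j0:V), rfl, he0E, ?_, ?_, Or.inr hsE.symm⟩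
        · rw [hsE]; exact he1E
        · rw [hsE]; exact hdrum
      have hcase : j = 0 ∨ j = 1 ∨ j = j0 ∨ j = j0+1 ∨ (2 ≤ j ∧ j ≤ j0-1) ∨
          (j0+2 ≤ j ∧ j < 2*m) := by omega
      rcases hcase with h | h | h | h | h | h
      · rw [h] at hje
        have h0' : a + ((0:ℕ):V) = a := by simp
        rw [h0'] at hje
        have he' := vertex_edge hM heM hje hpia
        rw [he']; exact hgood0
      · rw [h] at hje
        have he' := vertex_edge hM heM hje hpi1
        rw [he']; exact hgood1
      · rw [h] at hje
        have he' := vertex_edge hM heM hje hpiw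
        rw [he', Sym2.eq_swap]; exact hgood0
      · rw [h] at hje
        have he' := vertex_edge hM heM hje hpi1'
        rw [he', Sym2.eq_swap]; exact hgood1
      · have hmem : (a + ((2:ℕ):V)) + ((j-2:ℕ):V) ∈ e := by
          rw [add_add_cast]
          have h5 : 2 + (j-2) = j := by omega
          rw [h5]; exact hje
        have hg := ih ((j0-2)/2) (by omega) (by omega) _ hcloA e heM ⟨j-2, by omega, hmem⟩
        rwa [hparA] at hg
      · have hmem : (a + ((j0+2:ℕ):V)) + ((j-(j0+2):ℕ):V) ∈ e := by
          rw [add_add_cast]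
          have h5 : j0+2 + (j-(j0+2)) = j := by omega
          rw [h5]; exact hje
        have hg := ih ((2*m-j0-2)/2) (by omega) (by omega) _ hcloB e heM
          ⟨j-(j0+2), by omega, hmem⟩
        rwa [hparB] at hg
    · -- e1 = s(a-1, w-1) : impossible
      exfalso
      have hm1' : a - 1 = a + ((2*n-1 :ℕ):V) := by
        have hcc : ((2*n-1 :ℕ):V) = -1 := by
          rw [Nat.cast_sub (by omega), ZMod.natCast_self]
          simp
        rw [hcc]; ring
      rw [Sym2.eq_iff] at he1s
      rcases he1s with ⟨hA, _⟩ | ⟨_, hB⟩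
      · rw [hm1'] at hA
        have : jj = 2*n-1 := idx_inj hn (by omega) (by omega) hA
        omega
      · rw [hm1'] at hB
        have : k0 = 2*n-1 := idx_inj hn (by omega) (by omega) hB
        omega

end S12Z

namespace S12W
open S12 S12X S12Y S12Z
variable {n : ℕ}
local notation "V" => ZMod (2*n)

lemma top_drum (hn : 3 ≤ n) (G : SimpleGraph V) (h2 : Property2 n G) (h3 : Property3 n G)
    {M : Set (Sym2 V)} (hM : IsPerfectMatching G M)
    {e0 : Sym2 V} (he0M : e0 ∈ M) (hleg : IsLegal n e0) :
    ∃ (u : V) (j0 : ℕ), 2 ≤ j0 ∧ j0 ≤ 2*n - 2 ∧ j0 % 2 = 0 ∧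
      s(u, u + (j0:V)) ∈ M ∧ s(u + ((1:ℕ):V), u + ((j0+1:ℕ):V)) ∈ M ∧
      IsDrum n (s(u, u + (j0:V))) (s(u + ((1:ℕ):V), u + ((j0+1:ℕ):V))) := by
  obtain ⟨a, b, he0, hp⟩ := hleg
  rw [he0] at he0M
  have he0E : s(a,b) ∈ G.edgeSet := hM.1 he0M
  have hab : a ≠ b := fun h => G.irrefl ((SimpleGraph.mem_edgeSet G).mp (h ▸ he0E))
  set j0 := (b - a).val with hj0d
  have hb : b = a + (j0:V) := self_eq_add hn b a
  have hj0lt : j0 < 2*n := val_lt hn _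
  have hj0ne : j0 ≠ 0 := by
    intro h
    apply hab
    rw [hb, h]; simp
  have hj0e : j0 % 2 = 0 := by
    have h4 := par_add hn a j0
    rw [← hb] at h4
    omega
  have hj0ge2 : 2 ≤ j0 := by omega
  rw [hb] at he0M he0E
  have hlegc : IsLegal n (s(a, a + (j0:V))) := ⟨a, a + (j0:V), rfl, by rw [← hb]; exact hp⟩
  obtain ⟨jj, k0, hjj0, hjjlt, hk0gt, hk0lt, hpij⟩ :=
    escape hn hM a j0 hj0ge2 hj0lt hj0e he0M
  have he1 : s(a + (jj:V), a + (k0:V)) ∈ M := by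
    have := pi_mem hM (a + (jj:V)); rw [hpij] at this; exact this
  have hcross : Crosses n (s(a, a + (j0:V))) (s(a + (jj:V), a + (k0:V))) :=
    ⟨a, a + (j0:V), a + (jj:V), a + (k0:V), rfl, rfl,
      inArc1 hn a (by omega) (by omega) (by omega),
      inArc2 hn a (by omega) (by omega) (by omega)⟩
  have hdrum0 := h2 _ he0E _ (hM.1 he1) hcross
  have hw1 : (a + (j0:V)) + 1 = a + ((j0+1 :ℕ):V) := by push_cast; ring
  have hc1 : a + 1 = a + ((1:ℕ):V) := by norm_num
  have hm1' : a - 1 = a + ((2*n-1 :ℕ):V) := by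
    have hcc : ((2*n-1 :ℕ):V) = -1 := by
      rw [Nat.cast_sub (by omega), ZMod.natCast_self]
      simp
    rw [hcc]; ring
  rcases drum_shape hn hdrum0 with he1s | he1s
  · -- e1 = s(a+1, b+1) : u := a
    rw [Sym2.eq_iff] at he1s
    have hjk : jj = 1 ∧ k0 = j0 + 1 := by
      rcases he1s with ⟨hA, hB⟩ | ⟨hA, hB⟩
      · constructor
        · apply idx_inj hn (by omega) (by omega)
          rw [hA]; norm_num
        · apply idx_inj hn (by omega) (by omega)
          rw [hB, hw1]
      · exfalso
        have : k0 = 1 := by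
          apply idx_inj hn (by omega) (by omega)
          rw [hB]; norm_num
        omega
    obtain ⟨hjj1, hk0j⟩ := hjk
    rw [hjj1, hk0j] at he1 hdrum0
    exact ⟨a, j0, hj0ge2, by omega, hj0e, he0M, he1, hdrum0⟩
  · -- e1 = s(a-1, b-1) : u := a - 1
    rw [Sym2.eq_iff] at he1s
    have hwm1 : (a + (j0:V)) - 1 = a + ((j0-1 :ℕ):V) := by
      rw [Nat.cast_sub (by omega : 1 ≤ j0)]
      push_cast; ring
    have hjk : jj = j0 - 1 ∧ k0 = 2*n - 1 := by
      rcases he1s with ⟨hA, hB⟩ | ⟨hA, hB⟩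
      · exfalso
        rw [hm1'] at hA
        have : jj = 2*n - 1 := idx_inj hn (by omega) (by omega) hA
        omega
      · constructor
        · apply idx_inj hn (by omega) (by omega)
          rw [hA, hwm1]
        · apply idx_inj hn (by omega) (by omega)
          rw [hB, hm1']
    obtain ⟨hjj1, hk0j⟩ := hjk
    rw [hjj1, hk0j] at he1 hdrum0
    -- new base u := a - 1 = a + (2n-1)
    have hA1 : (a - 1) + (j0:V) = a + ((j0-1:ℕ):V) := by
      rw [Nat.cast_sub (by omega : 1 ≤ j0)]
      push_cast; ring
    have hkey1 : s(a - 1, (a - 1) + (j0:V)) = s(a + ((j0-1:ℕ):V), a + ((2*n-1:ℕ):V)) := by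
      rw [hA1, hm1', Sym2.eq_swap]
    have hB1 : (a-1) + ((1:ℕ):V) = a := by push_cast; ring
    have hB2 : (a-1) + ((j0+1:ℕ):V) = a + (j0:V) := by push_cast; ring
    have hkey2 : s((a-1) + ((1:ℕ):V), (a-1) + ((j0+1:ℕ):V)) = s(a, a + (j0:V)) := by
      rw [hB1, hB2]
    refine ⟨a - 1, j0, hj0ge2, by omega, hj0e, ?_, ?_, ?_⟩
    · rw [hkey1]; exact he1
    · rw [hkey2]; exact he0M
    · rw [hkey1, hkey2]
      exact isDrum_symm hn hdrum0

end S12W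

namespace S12T
open S12 S12X S12Y S12Z S12W
variable {n : ℕ}
local notation "V" => ZMod (2*n)

lemma mem_vertex (hn : 3 ≤ n) (u : V) (e : Sym2 V) :
    ∃ t : ℕ, t < 2*n ∧ u + (t:V) ∈ e := by
  induction e using Sym2.ind with
  | _ x y =>
    exact ⟨(x - u).val, val_lt hn _,
      Sym2.mem_iff.2 (Or.inl (self_eq_add hn x u).symm)⟩

lemma pm_good (hn : 3 ≤ n) (G : SimpleGraph V)
    (h1 : Property1 n G) (h2 : Property2 n G) (h3 : Property3 n G)
    {M : Set (Sym2 V)} (hM : IsPerfectMatching G M) :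
    ∃ p, p < 2 ∧ ∀ e ∈ M, GoodE n G p e := by
  by_cases hL : ∃ e ∈ M, IsLegal n e
  · obtain ⟨e0, he0M, hleg0⟩ := hL
    obtain ⟨u, j0, hj0ge2, hj02n, hj0e, heM0, heM1, hdrum⟩ :=
      top_drum hn G h2 h3 hM he0M hleg0
    refine ⟨u.val % 2, by omega, ?_⟩
    have he0E := hM.1 heM0
    have he1E := hM.1 heM1
    have hlegc : IsLegal n (s(u, u + (j0:V))) := hdrum.1
    have hpia : pi' hM u = u + (j0:V) := pi_eq hM heM0
    have hpiw : pi' hM (u + (j0:V)) = u := pi_eq hM (by rw [Sym2.eq_swap]; exact heM0)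
    have hpi1 : pi' hM (u + ((1:ℕ):V)) = u + ((j0+1:ℕ):V) := pi_eq hM heM1
    have hpi1' : pi' hM (u + ((j0+1:ℕ):V)) = u + ((1:ℕ):V) :=
      pi_eq hM (by rw [Sym2.eq_swap]; exact heM1)
    have huniqc : ∀ g ∈ M, Crosses n (s(u, u + (j0:V))) g →
        g = s(u + ((1:ℕ):V), u + ((j0+1:ℕ):V)) := by
      intro g hg hcg
      obtain ⟨f, hf, hfu⟩ := h3 _ he0E hlegc
      have hg1 := hfu g ⟨hM.1 hg, h2 _ he0E _ (hM.1 hg) hcg⟩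
      have hg2 := hfu _ ⟨he1E, hdrum⟩
      rw [hg1, ← hg2]
    have hidx : ∀ t : ℕ, 0 < t → t < 2*n → t ≠ 1 → t ≠ j0 → t ≠ j0 + 1 →
        ∃ k1, k1 < 2*n ∧ k1 ≠ 0 ∧ k1 ≠ 1 ∧ k1 ≠ j0 ∧ k1 ≠ j0+1 ∧
        pi' hM (u + (t:V)) = u + (k1:V) ∧ (2 ≤ t ∧ t ≤ j0 - 1 → 2 ≤ k1 ∧ k1 ≤ j0 - 1)
           ∧ (j0 + 2 ≤ t → j0 + 2 ≤ k1) := by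
      intro t ht0 htm ht1 htj0 htj1
      set k1 := (pi' hM (u + (t:V)) - u).val with hk1d
      have hk1m : k1 < 2*n := val_lt hn _
      have hpk1 : pi' hM (u + (t:V)) = u + (k1:V) := self_eq_add hn _ u
      have hk1ne0 : k1 ≠ 0 := by
        intro h0; rw [h0] at hpk1
        have h2' := congrArg (pi' hM) hpk1
        have h0' : u + ((0:ℕ):V) = u := by simp
        rw [pi_invol, h0', hpia] at h2'
        have : t = j0 := idx_inj hn (by omega) (by omega) h2'
        omega
      have hk1ne1 : k1 ≠ 1 := by
        intro h0; rw [h0] at hpk1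
        have h2' := congrArg (pi' hM) hpk1
        rw [pi_invol, hpi1] at h2'
        have : t = j0 + 1 := idx_inj hn (by omega) (by omega) h2'
        omega
      have hk1nej0 : k1 ≠ j0 := by
        intro h0; rw [h0] at hpk1
        have h2' := congrArg (pi' hM) hpk1
        rw [pi_invol, hpiw] at h2'
        have h3' : u + ((t:ℕ):V) = u + ((0:ℕ):V) := by rw [h2']; simp
        have : t = 0 := idx_inj hn (by omega) (by omega) h3'
        omega
      have hk1nej1 : k1 ≠ j0+1 := by
        intro h0; rw [h0] at hpk1
        have h2' := congrArg (pi' hM) hpk1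
        rw [pi_invol, hpi1'] at h2'
        have : t = 1 := idx_inj hn (by omega) (by omega) h2'
        omega
      refine ⟨k1, hk1m, hk1ne0, hk1ne1, hk1nej0, hk1nej1, hpk1, ?_, ?_⟩
      · rintro ⟨ht2, htj⟩
        by_contra hcon
        have hk1big : j0 + 2 ≤ k1 := by omega
        have hedge : s(u + (t:V), u + (k1:V)) ∈ M := by
          have := pi_mem hM (u + (t:V)); rw [hpk1] at this; exact this
        have hcr : Crosses n (s(u, u + (j0:V))) (s(u + (t:V), u + (k1:V))) :=
          ⟨u, u + (j0:V), _, _, rfl, rfl, inArc1 hn u (by omega) (by omega) (by omega),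
            inArc2 hn u (by omega) (by omega) (by omega)⟩
        have hu := huniqc _ hedge hcr
        rw [Sym2.eq_iff] at hu
        rcases hu with ⟨hA, _⟩ | ⟨hA, _⟩
        · have : t = 1 := idx_inj hn (by omega) (by omega) hA
          omega
        · have : t = j0+1 := idx_inj hn (by omega) (by omega) hA
          omega
      · intro htbig
        by_contra hcon
        have hk1small : 2 ≤ k1 ∧ k1 ≤ j0 - 1 := by omega
        have hedge : s(u + (t:V), u + (k1:V)) ∈ M := by
          have := pi_mem hM (u + (t:V)); rw [hpk1] at this; exact this
        have hcr : Crosses n (s(u, u + (j0:V))) (s(u + (k1:V), u + (t:V))) :=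
          ⟨u, u + (j0:V), _, _, rfl, rfl, inArc1 hn u (by omega) (by omega) (by omega),
            inArc2 hn u (by omega) (by omega) (by omega)⟩
        have hu := huniqc _ (by rw [Sym2.eq_swap]; exact hedge) hcr
        rw [Sym2.eq_iff] at hu
        rcases hu with ⟨_, hB⟩ | ⟨_, hB⟩
        · have : t = j0+1 := idx_inj hn (by omega) (by omega) hB
          omega
        · have : t = 1 := idx_inj hn (by omega) (by omega) hB
          omega
    have hcloA : ∀ j' : ℕ, j' < 2*((j0-2)/2) →
        ∃ k : ℕ, k < 2*((j0-2)/2) ∧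
          pi' hM ((u + ((2:ℕ):V)) + (j':V)) = (u + ((2:ℕ):V)) + (k:V) := by
      intro j' hj'
      have h2m' : 2*((j0-2)/2) = j0 - 2 := by omega
      obtain ⟨k1, hk1m, _, _, _, _, hpk1, hsm, _⟩ :=
        hidx (2+j') (by omega) (by omega) (by omega) (by omega) (by omega)
      obtain ⟨hA, hB⟩ := hsm ⟨by omega, by omega⟩
      refine ⟨k1 - 2, by omega, ?_⟩
      rw [add_add_cast, add_add_cast]
      have h5 : 2 + (k1 - 2) = k1 := by omega
      rw [h5, hpk1]
    have hcloB : ∀ j' : ℕ, j' < 2*((2*n - j0-2)/2) →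
        ∃ k : ℕ, k < 2*((2*n-j0-2)/2) ∧
          pi' hM ((u + ((j0+2:ℕ):V)) + (j':V)) = (u + ((j0+2:ℕ):V)) + (k:V) := by
      intro j' hj'
      have h2m' : 2*((2*n-j0-2)/2) = 2*n - j0 - 2 := by omega
      obtain ⟨k1, hk1m, _, _, _, _, hpk1, _, hbg⟩ :=
        hidx (j0+2+j') (by omega) (by omega) (by omega) (by omega) (by omega)
      have hB := hbg (by omega)
      refine ⟨k1 - (j0+2), by omega, ?_⟩
      rw [add_add_cast, add_add_cast]
      have h5 : j0+2 + (k1 - (j0+2)) = k1 := by omega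
      rw [h5, hpk1]
    have hparA : ((u + ((2:ℕ):V)).val % 2) = u.val % 2 := by rw [par_add hn]; omega
    have hparB : ((u + ((j0+2:ℕ):V)).val % 2) = u.val % 2 := by rw [par_add hn]; omega
    have hw1 : (u + (j0:V)) + 1 = u + ((j0+1 :ℕ):V) := by push_cast; ring
    have hc1 : u + 1 = u + ((1:ℕ):V) := by norm_num
    have hsE : s(u + 1, (u + (j0:V)) + 1) = s(u + ((1:ℕ):V), u + ((j0+1:ℕ):V)) := by
      rw [hc1, hw1]
    have hgood0 : GoodE n G (u.val % 2) (s(u, u + (j0:V))) := by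
      refine Or.inr ⟨u, u + (j0:V), rfl, he0E, ?_, ?_, Or.inl rfl⟩
      · rw [hsE]; exact he1E
      · rw [hsE]; exact hdrum
    have hgood1 : GoodE n G (u.val % 2) (s(u + ((1:ℕ):V), u + ((j0+1:ℕ):V))) := by
      refine Or.inr ⟨u, u + (j0:V), rfl, he0E, ?_, ?_, Or.inr hsE.symm⟩
      · rw [hsE]; exact he1E
      · rw [hsE]; exact hdrum
    intro e heM
    obtain ⟨t, ht2n, hte⟩ := mem_vertex hn u e
    have hcase : t = 0 ∨ t = 1 ∨ t = j0 ∨ t = j0+1 ∨ (2 ≤ t ∧ t ≤ j0-1) ∨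
        (j0+2 ≤ t ∧ t < 2*n) := by omega
    rcases hcase with h | h | h | h | h | h
    · rw [h] at hte
      have h0' : u + ((0:ℕ):V) = u := by simp
      rw [h0'] at hte
      have he' := vertex_edge hM heM hte hpia
      rw [he']; exact hgood0
    · rw [h] at hte
      have he' := vertex_edge hM heM hte hpi1
      rw [he']; exact hgood1
    · rw [h] at hte
      have he' := vertex_edge hM heM hte hpiw
      rw [he', Sym2.eq_swap]; exact hgood0
    · rw [h] at hte
      have he' := vertex_edge hM heM hte hpi1'
      rw [he', Sym2.eq_swap]; exact hgood1
    · have hmem : (u + ((2:ℕ):V)) + ((t-2:ℕ):V) ∈ e := by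
        rw [add_add_cast]
        have h5 : 2 + (t-2) = t := by omega
        rw [h5]; exact hte
      have hg := arc_good hn G h1 h2 h3 hM ((j0-2)/2) (by omega) _ hcloA e heM
        ⟨t-2, by omega, hmem⟩
      rwa [hparA] at hg
    · have hmem : (u + ((j0+2:ℕ):V)) + ((t-(j0+2):ℕ):V) ∈ e := by
        rw [add_add_cast]
        have h5 : j0+2 + (t-(j0+2)) = t := by omega
        rw [h5]; exact hte
      have hg := arc_good hn G h1 h2 h3 hM ((2*n-j0-2)/2) (by omega) _ hcloB e heM
        ⟨t-(j0+2), by omega, hmem⟩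
      rwa [hparB] at hg
  · push_neg at hL
    have hCedge : ∀ e ∈ M, ∃ i : V, e = s(i, i+1) := fun e he =>
      (h1 e (hM.1 he)).resolve_right (hL e he)
    obtain ⟨i, hi⟩ := hCedge _ (pi_mem hM 0)
    have hstart : s(i, i+1) ∈ M := by rw [← hi]; exact pi_mem hM 0
    refine ⟨i.val % 2, by omega, ?_⟩
    have hclaim : ∀ k : ℕ, k < n → s(i + ((2*k:ℕ):V), i + ((2*k+1:ℕ):V)) ∈ M := by
      intro k
      induction k with
      | zero =>
        intro _
        have h1' : i + ((2*0:ℕ):V) = i := by norm_num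
        have h2' : i + ((2*0+1:ℕ):V) = i + 1 := by norm_num
        rw [h1', h2']; exact hstart
      | succ k ihk =>
        intro hk1
        have hE := ihk (by omega)
        set x := i + ((2*k+2:ℕ):V) with hxd
        obtain ⟨i2, hi2⟩ := hCedge _ (pi_mem hM x)
        rcases cedge_shape hi2 with hxp | hxp
        · have hmem := pi_mem hM x
          rw [hxp] at hmem
          have hA : i + ((2*(k+1):ℕ):V) = x := by
            rw [hxd]
            have : 2*(k+1) = 2*k+2 := by ring
            rw [this]
          have hB : i + ((2*(k+1)+1:ℕ):V) = x + 1 := by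
            rw [hxd]; push_cast; ring
          rw [hA, hB]; exact hmem
        · exfalso
          have hpx : pi' hM x = i + ((2*k+1:ℕ):V) := by
            have h5 : pi' hM x = x - 1 := by
              rw [eq_sub_iff_add_eq]; exact hxp.symm
            rw [h5, hxd]; push_cast; ring
          have hq1 : x = pi' hM (i + ((2*k+1:ℕ):V)) := by
            have h5 := congrArg (pi' hM) hpx
            rw [pi_invol] at h5
            exact h5
          have hq2 : pi' hM (i + ((2*k+1:ℕ):V)) = i + ((2*k:ℕ):V) :=
            pi_eq hM (by rw [Sym2.eq_swap]; exact hE)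
          rw [hq2] at hq1
          rw [hxd] at hq1
          have : 2*k+2 = 2*k := idx_inj hn (by omega) (by omega) hq1
          omega
    intro e heM
    obtain ⟨t, ht2n, hte⟩ := mem_vertex hn i e
    have hk : t/2 < n := by omega
    have hE := hclaim (t/2) hk
    have hteE : i + (t:V) ∈ s(i + ((2*(t/2):ℕ):V), i + ((2*(t/2)+1:ℕ):V)) := by
      have hc : t = 2*(t/2) ∨ t = 2*(t/2)+1 := by omega
      rcases hc with h | h
      · exact Sym2.mem_iff.2 (Or.inl (congrArg (fun s : ℕ => i + (s:V)) h))
      · exact Sym2.mem_iff.2 (Or.inr (congrArg (fun s : ℕ => i + (s:V)) h))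
    have h5 := pi_uniq hM (i + (t:V)) heM hte
    have h6 := pi_uniq hM (i + (t:V)) hE hteE
    left
    refine ⟨i + ((2*(t/2):ℕ):V), ?_, ?_⟩
    · have hcomp : i + ((2*(t/2):ℕ):V) + 1 = i + ((2*(t/2)+1:ℕ):V) := by push_cast; ring
      rw [hcomp]
      exact h5.trans h6.symm
    · rw [par_add hn]; omega

end S12T

namespace S12F
open S12 S12X S12Y S12Z S12W S12T
variable {n : ℕ}
local notation "V" => ZMod (2*n)

def MP (n : ℕ) (p : ℕ) : Set (Sym2 (ZMod (2*n))) :=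
  {e | ∃ i : ZMod (2*n), e = s(i, i+1) ∧ i.val % 2 = p}

lemma idx_eq (hn : 3 ≤ n) {u : V} {t s : ℕ} (ht : t < 2*n) (hs : s < 2*n)
    (h : u + (t:V) = u + (s:V)) : t = s := idx_inj hn ht hs h

lemma idx_eq_zero (hn : 3 ≤ n) {u : V} {t : ℕ} (ht : t < 2*n) (h : u + (t:V) = u) : t = 0 := by
  have h' : u + (t:V) = u + ((0:ℕ):V) := by simpa using h
  exact idx_inj hn ht (by omega) h'

lemma MP_pm (hn : 3 ≤ n) (G : SimpleGraph V) (hC : ∀ i : V, G.Adj i (i + 1))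
    {p : ℕ} (hp : p < 2) : IsPerfectMatching G (MP n p) := by
  constructor
  · rintro e ⟨i, rfl, _⟩
    exact (SimpleGraph.mem_edgeSet G).2 (hC i)
  · intro v
    have hsucc : ∀ w : V, (w+1).val % 2 = (w.val + 1) % 2 := par_succ hn
    by_cases hv : v.val % 2 = p
    · refine ⟨s(v, v+1), ⟨⟨v, rfl, hv⟩, Sym2.mem_iff.2 (Or.inl rfl)⟩, ?_⟩
      rintro e' ⟨⟨i, rfl, hip⟩, hv'⟩
      rcases Sym2.mem_iff.1 hv' with h | h
      · rw [h]
      · exfalso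
        have := hsucc i
        rw [← h] at this
        omega
    · have hvm : (v - 1) + 1 = v := by ring
      have hpar : (v-1).val % 2 = p := by
        have := hsucc (v-1)
        rw [hvm] at this
        omega
      refine ⟨s(v-1, v), ⟨⟨v-1, by rw [hvm], hpar⟩, Sym2.mem_iff.2 (Or.inr rfl)⟩, ?_⟩
      rintro e' ⟨⟨i, rfl, hip⟩, hv'⟩
      rcases Sym2.mem_iff.1 hv' with h | h
      · exfalso; rw [h] at hv; omega
      · have hiv : i = v - 1 := by rw [h]; ring
        rw [hiv, hvm]

lemma MP_good (hn : 3 ≤ n) (G : SimpleGraph V) {p : ℕ} {e : Sym2 V}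
    (he : e ∈ MP n p) : GoodE n G p e := by
  obtain ⟨i, rfl, hip⟩ := he
  exact Or.inl ⟨i, rfl, hip⟩

end S12F

namespace S12G
open S12 S12X S12Y S12Z S12W S12T S12F
variable {n : ℕ}
local notation "V" => ZMod (2*n)

lemma chain (hn : 3 ≤ n) (G : SimpleGraph V) (hC : ∀ i : V, G.Adj i (i + 1))
    (h1 : Property1 n G) (h2 : Property2 n G) (h3 : Property3 n G)
    (c' : Sym2 V → ℕ)
    (hmono : ∀ M, IsPerfectMatching G M → ∀ e ∈ M, ∀ e' ∈ M, c' e = c' e') :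
    ∀ M, IsPerfectMatching G M → ∃ p, p < 2 ∧ ∀ e ∈ M, ∀ e' ∈ MP n p, c' e = c' e' := by
  haveI := nz hn
  suffices h : ∀ N : ℕ, ∀ M, IsPerfectMatching G M → (M ∩ {e | IsLegal n e}).ncard ≤ N →
      ∃ p, p < 2 ∧ ∀ e ∈ M, ∀ e' ∈ MP n p, c' e = c' e' by
    intro M hM
    exact h _ M hM le_rfl
  intro N
  induction N with
  | zero =>
    intro M hM hcard
    have hnoleg : ∀ e ∈ M, ¬ IsLegal n e := by
      intro e he hleg
      have hpos : 0 < (M ∩ {e | IsLegal n e}).ncard :=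
        (Set.ncard_pos (Set.toFinite _)).2 ⟨e, he, hleg⟩
      omega
    obtain ⟨i, hi⟩ := (h1 _ (hM.1 (pi_mem hM 0))).resolve_right (hnoleg _ (pi_mem hM 0))
    have hstart : s(i, i+1) ∈ M := by rw [← hi]; exact pi_mem hM 0
    refine ⟨i.val % 2, by omega, ?_⟩
    intro e he e' he'
    have hMP : s(i,i+1) ∈ MP n (i.val % 2) := ⟨i, rfl, rfl⟩
    calc c' e = c' (s(i,i+1)) := hmono M hM e he _ hstart
    _ = c' e' := hmono _ (MP_pm hn G hC (by omega)) _ hMP e' he'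
  | succ N ihN =>
    intro M hM hcard
    by_cases hleg : ∃ e ∈ M, IsLegal n e
    · obtain ⟨e0, he0M, hleg0⟩ := hleg
      obtain ⟨u, j0, hj0ge2, hj02n, hj0e, heM0, heM1, hdrum⟩ :=
        top_drum hn G h2 h3 hM he0M hleg0
      set E0 : Sym2 V := s(u, u + (j0:V)) with hE0d
      set E1 : Sym2 V := s(u + ((1:ℕ):V), u + ((j0+1:ℕ):V)) with hE1d
      set cu : Sym2 V := s(u, u + ((1:ℕ):V)) with hcud
      set cv : Sym2 V := s(u + (j0:V), u + ((j0+1:ℕ):V)) with hcvd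
      set M' : Set (Sym2 V) := insert cu (insert cv (M \ {E0, E1})) with hM'd
      have hpi0 : pi' hM u = u + (j0:V) := pi_eq hM heM0
      have hpij0 : pi' hM (u + (j0:V)) = u := pi_eq hM (by rw [Sym2.eq_swap]; exact heM0)
      have hpi1 : pi' hM (u + ((1:ℕ):V)) = u + ((j0+1:ℕ):V) := pi_eq hM heM1
      have hpij1 : pi' hM (u + ((j0+1:ℕ):V)) = u + ((1:ℕ):V) :=
        pi_eq hM (by rw [Sym2.eq_swap]; exact heM1)
      have hcuE : cu ∈ G.edgeSet := by
        rw [hcud]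
        have hx : u + ((1:ℕ):V) = u + 1 := by norm_num
        rw [hx]; exact (SimpleGraph.mem_edgeSet G).2 (hC u)
      have hcvE : cv ∈ G.edgeSet := by
        rw [hcvd]
        have hx : u + ((j0+1:ℕ):V) = (u + (j0:V)) + 1 := by push_cast; ring
        rw [hx]; exact (SimpleGraph.mem_edgeSet G).2 (hC (u + (j0:V)))
      have hmem' : ∀ g, g ∈ M' ↔ g = cu ∨ g = cv ∨ (g ∈ M ∧ g ≠ E0 ∧ g ≠ E1) := by
        intro g
        simp only [hM'd, Set.mem_insert_iff, Set.mem_diff, Set.mem_singleton_iff]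
        tauto
      have hM' : IsPerfectMatching G M' := by
        constructor
        · intro e he
          rcases (hmem' e).1 he with rfl | h | ⟨heM', _, _⟩
          · exact hcuE
          · rw [h]; exact hcvE
          · exact hM.1 heM'
        · intro z
          obtain ⟨t, ht2n, hz⟩ : ∃ t : ℕ, t < 2*n ∧ z = u + (t:V) :=
            ⟨(z-u).val, val_lt hn _, self_eq_add hn z u⟩
          subst hz
          have hcase : t = 0 ∨ t = 1 ∨ t = j0 ∨ t = j0+1 ∨
              (t ≠ 0 ∧ t ≠ 1 ∧ t ≠ j0 ∧ t ≠ j0+1) := by omega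
          have huniq_cu : ∀ g ∈ M', (u + (t:V)) ∈ g → (t = 0 ∨ t = 1) → g = cu := by
            intro g hg hzg ht01
            rcases (hmem' g).1 hg with rfl | rfl | ⟨hgM, hgE0, hgE1⟩
            · rfl
            · exfalso
              rw [hcvd] at hzg
              rcases Sym2.mem_iff.1 hzg with h' | h'
              · have := idx_eq hn ht2n (by omega) h'; omega
              · have := idx_eq hn ht2n (by omega) h'; omega
            · exfalso
              rcases ht01 with rfl | rfl
              · have h0' : u + ((0:ℕ):V) = u := by simp
                rw [h0'] at hzg
                exact hgE0 (vertex_edge hM hgM hzg hpi0)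
              · exact hgE1 (vertex_edge hM hgM hzg hpi1)
          have huniq_cv : ∀ g ∈ M', (u + (t:V)) ∈ g → (t = j0 ∨ t = j0+1) → g = cv := by
            intro g hg hzg htj
            rcases (hmem' g).1 hg with rfl | rfl | ⟨hgM, hgE0, hgE1⟩
            · exfalso
              rw [hcud] at hzg
              rcases Sym2.mem_iff.1 hzg with h' | h'
              · have := idx_eq_zero hn ht2n h'; omega
              · have := idx_eq hn ht2n (by omega) h'; omega
            · rfl
            · exfalso
              rcases htj with rfl | rfl
              · exact hgE0 (by
                  have := vertex_edge hM hgM hzg hpij0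
                  rw [this, hE0d, Sym2.eq_swap])
              · exact hgE1 (by
                  have := vertex_edge hM hgM hzg hpij1
                  rw [this, hE1d, Sym2.eq_swap])
          rcases hcase with rfl | rfl | h | h | ⟨h0, h1', hj, hj1⟩
          · refine ⟨cu, ⟨(hmem' cu).2 (Or.inl rfl), ?_⟩, fun g hg => huniq_cu g hg.1 hg.2 (Or.inl rfl)⟩
            rw [hcud]
            exact Sym2.mem_iff.2 (Or.inl (by simp))
          · refine ⟨cu, ⟨(hmem' cu).2 (Or.inl rfl), ?_⟩, fun g hg => huniq_cu g hg.1 hg.2 (Or.inr rfl)⟩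
            rw [hcud]
            exact Sym2.mem_iff.2 (Or.inr rfl)
          · subst h
            refine ⟨cv, ⟨(hmem' cv).2 (Or.inr (Or.inl rfl)), ?_⟩, fun g hg => huniq_cv g hg.1 hg.2 (Or.inl rfl)⟩
            rw [hcvd]
            exact Sym2.mem_iff.2 (Or.inl rfl)
          · subst h
            refine ⟨cv, ⟨(hmem' cv).2 (Or.inr (Or.inl rfl)), ?_⟩, fun g hg => huniq_cv g hg.1 hg.2 (Or.inr rfl)⟩
            rw [hcvd]
            exact Sym2.mem_iff.2 (Or.inr rfl)
          · have hgz : s(u + (t:V), pi' hM (u + (t:V))) ∈ M := pi_mem hM _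
            have hne0 : s(u + (t:V), pi' hM (u + (t:V))) ≠ E0 := by
              intro h
              have hz0mem : u + (t:V) ∈ E0 := by
                rw [← h]; exact Sym2.mem_iff.2 (Or.inl rfl)
              rw [hE0d] at hz0mem
              rcases Sym2.mem_iff.1 hz0mem with h' | h'
              · exact h0 (idx_eq_zero hn ht2n h')
              · exact hj (idx_eq hn ht2n (by omega) h')
            have hne1 : s(u + (t:V), pi' hM (u + (t:V))) ≠ E1 := by
              intro h
              have hz0mem : u + (t:V) ∈ E1 := by
                rw [← h]; exact Sym2.mem_iff.2 (Or.inl rfl)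
              rw [hE1d] at hz0mem
              rcases Sym2.mem_iff.1 hz0mem with h' | h'
              · exact h1' (idx_eq hn ht2n (by omega) h')
              · exact hj1 (idx_eq hn ht2n (by omega) h')
            refine ⟨s(u + (t:V), pi' hM (u + (t:V))),
              ⟨(hmem' _).2 (Or.inr (Or.inr ⟨hgz, hne0, hne1⟩)), Sym2.mem_iff.2 (Or.inl rfl)⟩, ?_⟩
            rintro g ⟨hg, hzg⟩
            rcases (hmem' g).1 hg with rfl | rfl | ⟨hgM, _, _⟩
            · exfalso
              rw [hcud] at hzg
              rcases Sym2.mem_iff.1 hzg with h' | h'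
              · exact h0 (idx_eq_zero hn ht2n h')
              · exact h1' (idx_eq hn ht2n (by omega) h')
            · exfalso
              rw [hcvd] at hzg
              rcases Sym2.mem_iff.1 hzg with h' | h'
              · exact hj (idx_eq hn ht2n (by omega) h')
              · exact hj1 (idx_eq hn ht2n (by omega) h')
            · exact pi_uniq hM _ hgM hzg
      have hE0L : IsLegal n E0 := hdrum.1
      have hE1L : IsLegal n E1 := hdrum.2.1
      have hE0E1 : E0 ≠ E1 := by
        intro h
        rw [hE0d, hE1d, Sym2.eq_iff] at h
        rcases h with ⟨hA, _⟩ | ⟨hA, _⟩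
        · have : (1:ℕ) = 0 := idx_eq_zero hn (by omega) hA.symm
          omega
        · have : (j0+1:ℕ) = 0 := idx_eq_zero hn (by omega) hA.symm
          omega
      have hsub : M' ∩ {e | IsLegal n e} ⊆ (M ∩ {e | IsLegal n e}) \ {E0, E1} := by
        rintro g ⟨hg, hgL⟩
        rcases (hmem' g).1 hg with rfl | rfl | ⟨hgM, hgE0, hgE1⟩
        · exfalso
          rw [hcud] at hgL
          have hx : u + ((1:ℕ):V) = u + 1 := by norm_num
          rw [hx] at hgL
          exact not_legal_cedge hn u hgL
        · exfalso
          rw [hcvd] at hgL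
          have hx : u + ((j0+1:ℕ):V) = (u + (j0:V)) + 1 := by push_cast; ring
          rw [hx] at hgL
          exact not_legal_cedge hn (u + (j0:V)) hgL
        · refine ⟨⟨hgM, hgL⟩, ?_⟩
          simp only [Set.mem_insert_iff, Set.mem_singleton_iff]
          tauto
      have hcard' : (M' ∩ {e | IsLegal n e}).ncard ≤ N := by
        have hts : ({E0, E1} : Set (Sym2 V)) ⊆ M ∩ {e | IsLegal n e} := by
          intro g hg
          simp only [Set.mem_insert_iff, Set.mem_singleton_iff] at hg
          rcases hg with rfl | rfl
          · exact ⟨heM0, hE0L⟩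
          · exact ⟨heM1, hE1L⟩
        have hle := Set.ncard_le_ncard hsub (Set.toFinite _)
        have hdiff := Set.ncard_diff hts (Set.toFinite _)
        have hpair : ({E0, E1} : Set (Sym2 V)).ncard = 2 := Set.ncard_pair hE0E1
        omega
      obtain ⟨p, hp2, hcol'⟩ := ihN M' hM' hcard'
      set t0 : ℕ := if 4 ≤ j0 then 2 else 4 with ht0d
      have ht0 : t0 < 2*n ∧ t0 ≠ 0 ∧ t0 ≠ 1 ∧ t0 ≠ j0 ∧ t0 ≠ j0+1 := by
        rw [ht0d]; split <;> omega
      obtain ⟨ht0lt, ht00, ht01, ht0j, ht0j1⟩ := ht0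
      set z0 := u + (t0:V) with hz0d
      have hez0 : s(z0, pi' hM z0) ∈ M := pi_mem hM z0
      have hz0E0 : s(z0, pi' hM z0) ≠ E0 := by
        intro h
        have hz0mem : z0 ∈ E0 := by rw [← h]; exact Sym2.mem_iff.2 (Or.inl rfl)
        rw [hE0d, hz0d] at hz0mem
        rcases Sym2.mem_iff.1 hz0mem with h' | h'
        · exact ht00 (idx_eq_zero hn ht0lt h')
        · exact ht0j (idx_eq hn ht0lt (by omega) h')
      have hz0E1 : s(z0, pi' hM z0) ≠ E1 := by
        intro h
        have hz0mem : z0 ∈ E1 := by rw [← h]; exact Sym2.mem_iff.2 (Or.inl rfl)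
        rw [hE1d, hz0d] at hz0mem
        rcases Sym2.mem_iff.1 hz0mem with h' | h'
        · exact ht01 (idx_eq hn ht0lt (by omega) h')
        · exact ht0j1 (idx_eq hn ht0lt (by omega) h')
      have hez0' : s(z0, pi' hM z0) ∈ M' := (hmem' _).2 (Or.inr (Or.inr ⟨hez0, hz0E0, hz0E1⟩))
      refine ⟨p, hp2, ?_⟩
      intro e he e' he'
      calc c' e = c' (s(z0, pi' hM z0)) := hmono M hM e he _ hez0
      _ = c' e' := hcol' _ hez0' e' he'
    · push_neg at hleg
      have hempty : M ∩ {e | IsLegal n e} = ∅ := by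
        ext g; simp only [Set.mem_inter_iff, Set.mem_setOf_eq, Set.mem_empty_iff_false,
          iff_false, not_and]
        exact hleg g
      exact ihN M hM (by rw [hempty]; simp)

end S12G


theorem statement_12 (n : ℕ) (hn : 3 ≤ n) (G : SimpleGraph (ZMod (2 * n)))
    (hC : ∀ i : ZMod (2 * n), G.Adj i (i + 1)) (hmc : MatchingCovered G)
    (h1 : Property1 n G) (h2 : Property2 n G) (h3 : Property3 n G) :
    (∃ c : Sym2 (ZMod (2 * n)) → ℕ, PMValid G c 2) ∧ matchingIndex G = 2 := by
  classical
  haveI := S12.nz hn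
  haveI : Fact (1 < 2*n) := ⟨by omega⟩
  set c : Sym2 (ZMod (2*n)) → ℕ := fun e => if S12X.GoodE n G 1 e then 1 else 2 with hcd
  have hpm2 : PMValid G c 2 := by
    refine ⟨?_, ?_, ?_⟩
    · intro e _
      simp only [hcd]
      rw [Finset.mem_Icc]
      split <;> omega
    · intro M hM e he e' he'
      obtain ⟨p, hp2, hall⟩ := S12T.pm_good hn G h1 h2 h3 hM
      rcases (show p = 0 ∨ p = 1 by omega) with rfl | rfl
      · have hne : ∀ f, f ∈ M → ¬ S12X.GoodE n G 1 f := fun f hf hg =>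
          S12X.good_unique hn G h3 (hM.1 hf) (hall f hf) hg
        simp only [hcd]
        rw [if_neg (hne e he), if_neg (hne e' he')]
      · simp only [hcd]
        rw [if_pos (hall e he), if_pos (hall e' he')]
    · intro i hi
      rw [Finset.mem_Icc] at hi
      rcases (show i = 1 ∨ i = 2 by omega) with rfl | rfl
      · refine ⟨S12F.MP n 1, S12F.MP_pm hn G hC (by omega), ?_⟩
        intro e he
        simp only [hcd]
        rw [if_pos (S12F.MP_good hn G he)]
      · refine ⟨S12F.MP n 0, S12F.MP_pm hn G hC (by omega), ?_⟩
        intro e he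
        have hE : e ∈ G.edgeSet := (S12F.MP_pm hn G hC (show (0:ℕ) < 2 by omega)).1 he
        simp only [hcd]
        rw [if_neg (fun hg => S12X.good_unique hn G h3 hE (S12F.MP_good hn G he) hg)]
  have hbound : ∀ k ∈ {k | ∃ c : Sym2 (ZMod (2*n)) → ℕ, PMValid G c k}, k ≤ 2 := by
    rintro k ⟨c', hIcc, hmono, hexist⟩
    by_contra hk
    push_neg at hk
    have hkey : ∀ i : ℕ, 1 ≤ i → i ≤ k →
        i = c' (s((0:ZMod (2*n)), 0+1)) ∨ i = c' (s((1:ZMod (2*n)), 1+1)) := by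
      intro i h1i hik
      obtain ⟨Mi, hMi, hcol⟩ := hexist i (Finset.mem_Icc.2 ⟨h1i, hik⟩)
      obtain ⟨p, hp2, hchain⟩ := S12G.chain hn G hC h1 h2 h3 c' hmono Mi hMi
      have he00 := S12.pi_mem hMi 0
      have hival : i = c' (s(0, S12.pi' hMi 0)) := (hcol _ he00).symm
      rcases (show p = 0 ∨ p = 1 by omega) with rfl | rfl
      · left
        rw [hival]
        have h0MP : s((0:ZMod (2*n)), 0+1) ∈ S12F.MP n 0 :=
          ⟨0, rfl, by simp [ZMod.val_zero]⟩
        exact hchain _ he00 _ h0MP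
      · right
        rw [hival]
        have h1MP : s((1:ZMod (2*n)), 1+1) ∈ S12F.MP n 1 :=
          ⟨1, rfl, by rw [ZMod.val_one]⟩
        exact hchain _ he00 _ h1MP
    have c1 := hkey 1 (by omega) (by omega)
    have c2 := hkey 2 (by omega) (by omega)
    have c3 := hkey 3 (by omega) (by omega)
    omega
  have h2mem : 2 ∈ {k | ∃ c : Sym2 (ZMod (2*n)) → ℕ, PMValid G c k} := ⟨c, hpm2⟩
  refine ⟨⟨c, hpm2⟩, ?_⟩
  exact le_antisymm (csSup_le ⟨2, h2mem⟩ hbound) (le_csSup ⟨2, hbound⟩ h2mem)
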